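/- Let N be a positive integer, let d : Fin N × Fin N → ℝ be symmetric, nonnegative, and satisfy the triangle inequality, and let S be a real symmetric N×N matrix all of whose eigenvalues lie in [a, b] with 0 < a ≤ b; set κ := b/a. Assume S has bandwidth β ≥ 0 with respect to d, i.e., S_{ij} = 0 whenever d(i,j) > β. Then S is invertible, and for every natural number k ≥ 1 there exists a real N×N matrix R such that R_{ij} = 0 whenever d(i,j) > k·β, and ‖S⁻¹ − R‖₂ ≤ (2/a)·((√κ − 1)/(√κ + 1))^k. -/

import Mathlib

/-- The spectral norm (ℓ²-operator norm) of a real rectangular matrix. -/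
noncomputable def l2OpNorm {m n : Type*} [Fintype m] [Fintype n] [DecidableEq n]
    (M : Matrix m n ℝ) : ℝ :=
  ‖LinearMap.toContinuousLinearMap (Matrix.toEuclideanLin M)‖

open Polynomial

section ChebyshevAux

lemma T_natDegree_le : ∀ k : ℕ, (Polynomial.Chebyshev.T ℝ k).natDegree ≤ k := by
  intro k
  induction k using Nat.twoStepInduction with
  | zero => simp [Polynomial.Chebyshev.T_zero]
  | one => simp [Polynomial.Chebyshev.T_one]
  | more n ih1 ih2 =>
    have h : ((n : ℤ) + 2) = ((n + 2 : ℕ) : ℤ) := by push_cast; ring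
    rw [← h, Polynomial.Chebyshev.T_add_two]
    refine le_trans (natDegree_sub_le _ _) ?_
    have h1 : (2 * X * Polynomial.Chebyshev.T ℝ ((n:ℤ) + 1)).natDegree ≤ n + 2 := by
      refine le_trans (natDegree_mul_le) ?_
      have : (2 * X : ℝ[X]).natDegree ≤ 1 := le_trans natDegree_mul_le (by simp)
      have h2 : ((n : ℤ) + 1) = ((n + 1 : ℕ) : ℤ) := by push_cast; ring
      rw [h2]
      omega
    simp only [max_le_iff]
    exact ⟨h1, le_trans ih1 (by omega)⟩

lemma cheb_eval_cosh (k : ℤ) (t : ℝ) :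
    (Polynomial.Chebyshev.T ℝ k).eval (Real.cosh t) = Real.cosh (k * t) := by
  have h := Polynomial.Chebyshev.T_complex_cos ((t : ℂ) * Complex.I) k
  rw [Complex.cos_mul_I] at h
  have h2 := Polynomial.Chebyshev.complex_ofReal_eval_T (Real.cosh t) k
  rw [Complex.ofReal_cosh, h] at h2
  apply Complex.ofReal_injective
  rw [h2]
  have : (k : ℂ) * ((t:ℂ) * Complex.I) = ((k * t : ℝ) : ℂ) * Complex.I := by push_cast; ring
  rw [this, Complex.cos_mul_I, ← Complex.ofReal_cosh]

lemma cheb_abs_le (k : ℤ) {x : ℝ} (h1 : -1 ≤ x) (h2 : x ≤ 1) :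
    |(Polynomial.Chebyshev.T ℝ k).eval x| ≤ 1 := by
  have : x = Real.cos (Real.arccos x) := (Real.cos_arccos h1 h2).symm
  rw [this, Polynomial.Chebyshev.T_real_cos]
  exact Real.abs_cos_le_one _

lemma cheb_lower (k : ℕ) {y : ℝ} (hy : 1 ≤ y) :
    (y + Real.sqrt (y ^ 2 - 1)) ^ k / 2 ≤ (Polynomial.Chebyshev.T ℝ k).eval y := by
  set s := Real.sqrt (y ^ 2 - 1) with hs
  have hy2 : (0:ℝ) ≤ y ^ 2 - 1 := by nlinarith
  have hs2 : s ^ 2 = y ^ 2 - 1 := Real.sq_sqrt hy2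
  have hsnn : 0 ≤ s := Real.sqrt_nonneg _
  have hxpos : 0 < y + s := by nlinarith
  have hinv : (y + s)⁻¹ = y - s := by
    have : (y + s) * (y - s) = 1 := by nlinarith
    field_simp at this ⊢
    nlinarith
  have hcosh : Real.cosh (Real.log (y + s)) = y := by
    rw [Real.cosh_log hxpos, hinv]; ring
  have h := cheb_eval_cosh k (Real.log (y + s))
  rw [hcosh] at h
  rw [h]
  rw [Real.cosh_eq]
  have hexp : Real.exp ((k:ℝ) * Real.log (y + s)) = (y + s) ^ k := by
    rw [mul_comm, Real.exp_mul, Real.exp_log hxpos]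
    rw [← Real.rpow_natCast]
  push_cast
  rw [hexp]
  have : 0 ≤ Real.exp (-((k:ℝ) * Real.log (y + s))) := le_of_lt (Real.exp_pos _)
  linarith

end ChebyshevAux

section MatrixAux

open scoped Matrix.Norms.L2Operator

lemma l2OpNorm_eq {n : Type*} [Fintype n] [DecidableEq n] (M : Matrix n n ℝ) :
    l2OpNorm M = ‖M‖ := rfl

lemma l2OpNorm_diagonal_le {n : Type*} [Fintype n] [DecidableEq n] (g : n → ℝ) (C : ℝ)
    (hC : 0 ≤ C) (h : ∀ i, |g i| ≤ C) : l2OpNorm (Matrix.diagonal g) ≤ C := by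
  refine ContinuousLinearMap.opNorm_le_bound _ hC ?_
  intro x
  rw [LinearMap.coe_toContinuousLinearMap']
  rw [Matrix.toEuclideanLin_apply]
  have hnorm : ∀ y : EuclideanSpace ℝ n, ‖y‖ = Real.sqrt (∑ i, (y i)^2) := by
    intro y
    rw [EuclideanSpace.norm_eq]
    congr 1
    refine Finset.sum_congr rfl fun i _ => ?_
    rw [Real.norm_eq_abs, sq_abs]
  rw [hnorm, hnorm]
  rw [← Real.sqrt_sq hC, ← Real.sqrt_mul (sq_nonneg C)]
  apply Real.sqrt_le_sqrt
  rw [Finset.mul_sum]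
  refine Finset.sum_le_sum fun i _ => ?_
  have : ((WithLp.equiv 2 (n → ℝ)).symm
        (Matrix.mulVec (Matrix.diagonal g) ((WithLp.equiv 2 (n → ℝ)) x))) i
      = g i * x i := by
    show (Matrix.mulVec (Matrix.diagonal g) _) i = _
    rw [Matrix.mulVec_diagonal]
    rfl
  rw [show (WithLp.toLp 2 ((Matrix.diagonal g).mulVec x.ofLp)) i = g i * x i from this, mul_pow]
  have h2 : (g i)^2 ≤ C^2 := by
    have := h i
    nlinarith [abs_nonneg (g i), sq_abs (g i)]
  nlinarith [sq_nonneg (x i)]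

/-- Conjugation by a unitary matrix, as an algebra homomorphism. -/
noncomputable def unitaryConj {n : Type*} [Fintype n] [DecidableEq n]
    (U : Matrix.unitaryGroup n ℝ) : Matrix n n ℝ →ₐ[ℝ] Matrix n n ℝ where
  toFun M := (U : Matrix n n ℝ) * M * star (U : Matrix n n ℝ)
  map_one' := by
    show (U : Matrix n n ℝ) * 1 * star (U : Matrix n n ℝ) = 1
    rw [mul_one]
    exact (Matrix.mem_unitaryGroup_iff).mp U.2
  map_mul' M N := by
    have h : star (U : Matrix n n ℝ) * (U : Matrix n n ℝ) = 1 :=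
      (Matrix.mem_unitaryGroup_iff').mp U.2
    calc (U : Matrix n n ℝ) * (M * N) * star (U : Matrix n n ℝ)
        = (U : Matrix n n ℝ) * M * (star (U : Matrix n n ℝ) * (U : Matrix n n ℝ)) * N
          * star (U : Matrix n n ℝ) := by rw [h]; noncomm_ring
      _ = _ := by noncomm_ring
  map_zero' := by simp
  map_add' M N := by noncomm_ring
  commutes' r := by
    simp only [Algebra.algebraMap_eq_smul_one]
    rw [mul_smul_comm, smul_mul_assoc, mul_one]
    congr 1
    exact (Matrix.mem_unitaryGroup_iff).mp U.2

lemma aeval_unitaryConj {n : Type*} [Fintype n] [DecidableEq n]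
    (U : Matrix.unitaryGroup n ℝ) (D : Matrix n n ℝ) (f : ℝ[X]) :
    aeval ((U : Matrix n n ℝ) * D * star (U : Matrix n n ℝ)) f
      = (U : Matrix n n ℝ) * (aeval D f) * star (U : Matrix n n ℝ) :=
  Polynomial.aeval_algHom_apply (unitaryConj U) D f

lemma aeval_diagonal {n : Type*} [Fintype n] [DecidableEq n] (v : n → ℝ) (f : ℝ[X]) :
    aeval (Matrix.diagonal v) f = Matrix.diagonal (fun i => f.eval (v i)) := by
  have h := Polynomial.aeval_algHom_apply (Matrix.diagonalAlgHom (n := n) (α := ℝ) ℝ) v f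
  simp only [Matrix.diagonalAlgHom_apply] at h
  rw [h]
  have h3 : (aeval v f : n → ℝ) = fun i => f.eval (v i) := by
    funext i
    have h2 := Polynomial.aeval_algHom_apply (Pi.evalAlgHom ℝ (fun _ : n => ℝ) i) v f
    simp only [Pi.evalAlgHom_apply] at h2
    rw [← h2, Polynomial.coe_aeval_eq_eval]
  rw [h3]

end MatrixAux

set_option maxHeartbeats 2000000 in
open scoped Matrix.Norms.L2Operator in
/-- Banded approximate inverse: if `S` is real symmetric with all eigenvalues in `[a, b]`,
`0 < a ≤ b`, `κ = b/a`, and `S` has bandwidth `β` with respect to a semi-metric `d`, then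
`S` is invertible and for every `k ≥ 1` there is a matrix `R` of bandwidth `k·β` with
`‖S⁻¹ - R‖₂ ≤ (2/a)((√κ - 1)/(√κ + 1))^k`. -/
theorem banded_approximate_inverse
    {N : ℕ} (hN : 0 < N) (d : Fin N × Fin N → ℝ)
    (hsym : ∀ i j, d (i, j) = d (j, i))
    (hnonneg : ∀ i j, 0 ≤ d (i, j))
    (htri : ∀ i j m, d (i, j) ≤ d (i, m) + d (m, j))
    (S : Matrix (Fin N) (Fin N) ℝ) (hS : S.IsHermitian)
    (a b : ℝ) (ha : 0 < a) (hab : a ≤ b)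
    (heig : ∀ i, hS.eigenvalues i ∈ Set.Icc a b)
    (β : ℝ) (hβ : 0 ≤ β) (hband : ∀ i j, β < d (i, j) → S i j = 0) :
    IsUnit S ∧
    ∀ k : ℕ, 1 ≤ k → ∃ R : Matrix (Fin N) (Fin N) ℝ,
      (∀ i j, (k : ℝ) * β < d (i, j) → R i j = 0) ∧
      l2OpNorm (S⁻¹ - R) ≤
        (2 / a) * ((Real.sqrt (b / a) - 1) / (Real.sqrt (b / a) + 1)) ^ k := by
  classical
  haveI : Nonempty (Fin N) := Fin.pos_iff_nonempty.mp hN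
  set U : Matrix (Fin N) (Fin N) ℝ := (hS.eigenvectorUnitary : Matrix (Fin N) (Fin N) ℝ)
    with hU
  set lam : Fin N → ℝ := hS.eigenvalues with hlam
  have hspec : S = U * Matrix.diagonal lam * star U := by
    have h := hS.spectral_theorem
    simpa [RCLike.ofReal, Function.comp] using h
  have hlampos : ∀ i, 0 < lam i := fun i => lt_of_lt_of_le ha (heig i).1
  -- invertibility
  have hunit : IsUnit S := by
    rw [Matrix.isUnit_iff_isUnit_det]
    rw [hS.det_eq_prod_eigenvalues]
    exact (Finset.prod_pos (fun i _ => hlampos i)).ne'.isUnit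
  refine ⟨hunit, ?_⟩
  -- diagonal entries of S are at least a
  have hSii : ∀ i, a ≤ S i i := by
    intro i
    have hrow : ∑ j, (U i j)^2 = 1 := by
      have h1 : (U * star U) i i = 1 := by
        rw [(Matrix.mem_unitaryGroup_iff).mp hS.eigenvectorUnitary.2]
        simp
      rw [Matrix.mul_apply] at h1
      rw [← h1]
      refine Finset.sum_congr rfl fun j _ => ?_
      simp [Matrix.star_apply, sq]
    have hentry : S i i = ∑ j, lam j * (U i j)^2 := by
      conv_lhs => rw [hspec]
      rw [Matrix.mul_apply]
      refine Finset.sum_congr rfl fun j _ => ?_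
      rw [Matrix.mul_apply, Finset.sum_mul]
      rw [Finset.sum_eq_single j]
      · simp [Matrix.diagonal_apply_eq, Matrix.star_apply, sq]; ring
      · intro l _ hl; simp [Matrix.diagonal_apply_ne _ hl]
      · intro h; exact absurd (Finset.mem_univ j) h
    rw [hentry]
    calc a = a * ∑ j, (U i j)^2 := by rw [hrow, mul_one]
      _ ≤ _ := by
          rw [Finset.mul_sum]
          exact Finset.sum_le_sum fun j _ =>
            mul_le_mul_of_nonneg_right (heig j).1 (sq_nonneg _)
  -- the semi-metric is at most β on the diagonal
  have hdii : ∀ i, d (i, i) ≤ β := by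
    intro i
    by_contra h
    have := hband i i (lt_of_not_ge h)
    have := hSii i
    linarith
  -- bandwidth of powers of S
  have hpow : ∀ m : ℕ, ∀ i j, ((m:ℝ) + 1) * β < d (i, j) → (S ^ m) i j = 0 := by
    intro m
    induction m with
    | zero =>
      intro i j hlt
      simp only [Nat.cast_zero, zero_add, one_mul] at hlt
      rw [pow_zero]
      rcases eq_or_ne i j with rfl | hij
      · exact absurd hlt (not_lt.mpr (hdii i))
      · exact Matrix.one_apply_ne hij
    | succ m ih =>
      intro i j hlt
      rw [pow_succ, Matrix.mul_apply]
      refine Finset.sum_eq_zero fun l _ => ?_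
      by_cases hcase : ((m:ℝ) + 1) * β < d (i, l)
      · rw [ih i l hcase, zero_mul]
      · push_neg at hcase
        have hdlj : β < d (l, j) := by
          have h1 := htri i j l
          push_cast at hlt
          nlinarith
        rw [hband l j hdlj, mul_zero]
  intro k hk
  have hk1 : (1:ℝ) ≤ (k:ℝ) := by exact_mod_cast hk
  rcases eq_or_lt_of_le hab with heq | hlt_ab
  · -- degenerate case a = b : S = a • 1
    subst heq
    have hlam_eq : ∀ i, lam i = a := fun i => le_antisymm (heig i).2 (heig i).1
    have hSa : S = a • (1 : Matrix (Fin N) (Fin N) ℝ) := by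
      rw [hspec]
      have : Matrix.diagonal lam = a • (1 : Matrix (Fin N) (Fin N) ℝ) := by
        ext i j
        rcases eq_or_ne i j with rfl | hij
        · simp [hlam_eq i]
        · simp [Matrix.diagonal_apply_ne _ hij, Matrix.one_apply_ne hij]
      rw [this, Matrix.mul_smul, Matrix.smul_mul, mul_one]
      rw [(Matrix.mem_unitaryGroup_iff).mp hS.eigenvectorUnitary.2]
    refine ⟨a⁻¹ • (1 : Matrix (Fin N) (Fin N) ℝ), ?_, ?_⟩
    · intro i j hd
      rcases eq_or_ne i j with rfl | hij
      · exfalso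
        have : d (i, i) ≤ (k:ℝ) * β := le_trans (hdii i) (by nlinarith)
        linarith
      · simp [Matrix.one_apply_ne hij]
    · have hSinv : S⁻¹ = a⁻¹ • (1 : Matrix (Fin N) (Fin N) ℝ) := by
        apply Matrix.inv_eq_right_inv
        rw [hSa, smul_mul_smul_comm, mul_one, mul_inv_cancel₀ (ne_of_gt ha), one_smul]
      rw [hSinv, sub_self]
      have hzero : l2OpNorm (0 : Matrix (Fin N) (Fin N) ℝ) = 0 := by
        rw [l2OpNorm_eq, norm_zero]
      rw [hzero]
      have : Real.sqrt (a / a) = 1 := by rw [div_self (ne_of_gt ha), Real.sqrt_one]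
      rw [this]
      simp only [sub_self, zero_div]
      rw [zero_pow (by omega : k ≠ 0), mul_zero]
  · -- main case a < b
    set s : ℝ := Real.sqrt (b / a) with hs_def
    have hba1 : 1 < b / a := (one_lt_div ha).mpr hlt_ab
    have hs_sq : s ^ 2 = b / a := Real.sq_sqrt (by positivity)
    have hs_nonneg : 0 ≤ s := Real.sqrt_nonneg _
    have hs1 : 1 < s := by nlinarith
    set ρ : ℝ := (s - 1) / (s + 1) with hρ_def
    have hρpos : 0 < ρ := div_pos (by linarith) (by linarith)
    have hρlt : ρ < 1 := (div_lt_one (by linarith)).mpr (by linarith)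
    have hb_eq : b = a * s ^ 2 := by
      rw [hs_sq]; field_simp
    have hba_pos : 0 < b - a := by linarith
    set σ : ℝ := (b + a) / (b - a) with hσ_def
    have hσ1 : 1 < σ := by
      rw [hσ_def, lt_div_iff₀ hba_pos]; linarith
    -- √(σ² - 1) = 2 a s / (b - a)
    have hsqrtσ : Real.sqrt (σ ^ 2 - 1) = 2 * a * s / (b - a) := by
      have h1 : σ ^ 2 - 1 = (2 * a * s / (b - a)) ^ 2 := by
        rw [hσ_def]
        field_simp
        nlinarith [hb_eq]
      rw [h1, Real.sqrt_sq (by positivity)]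
    have hρx : ρ * (σ + Real.sqrt (σ ^ 2 - 1)) = 1 := by
      rw [hsqrtσ, hρ_def, hσ_def, hb_eq]
      have hs1' : s - 1 ≠ 0 := by linarith
      have hs1'' : s + 1 ≠ 0 := by linarith
      have hden : a * s ^ 2 - a ≠ 0 := by nlinarith
      have hs2' : -1 + s ^ 2 ≠ 0 := by intro h; nlinarith
      field_simp
      ring_nf
      field_simp
      ring
    -- the Chebyshev value at σ
    set c : ℝ := (Polynomial.Chebyshev.T ℝ (k:ℤ)).eval σ with hc_def
    have hc_lower : (σ + Real.sqrt (σ ^ 2 - 1)) ^ k / 2 ≤ c := cheb_lower k (le_of_lt hσ1)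
    have hxpos : 0 < σ + Real.sqrt (σ ^ 2 - 1) := by
      have := Real.sqrt_nonneg (σ ^ 2 - 1); linarith
    have hcpos : 0 < c := lt_of_lt_of_le (by positivity) hc_lower
    have hcρ : 1 ≤ 2 * c * ρ ^ k := by
      have h1 : ((σ + Real.sqrt (σ ^ 2 - 1)) * ρ) ^ k = 1 := by
        rw [mul_comm, hρx, one_pow]
      calc (1:ℝ) = ((σ + Real.sqrt (σ ^ 2 - 1)) * ρ) ^ k := h1.symm
        _ = (σ + Real.sqrt (σ ^ 2 - 1)) ^ k * ρ ^ k := mul_pow _ _ _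
        _ ≤ (2 * c) * ρ ^ k := by
            have := pow_pos hρpos k
            have h2 : (σ + Real.sqrt (σ ^ 2 - 1)) ^ k ≤ 2 * c := by linarith
            exact mul_le_mul_of_nonneg_right h2 (le_of_lt this)
    have hcinv : c⁻¹ ≤ 2 * ρ ^ k := by
      rw [inv_le_iff_one_le_mul₀ hcpos]
      calc (1:ℝ) ≤ 2 * c * ρ ^ k := hcρ
        _ = 2 * ρ ^ k * c := by ring
    -- the polynomial p
    set u : ℝ[X] := C σ - C (2 / (b - a)) * X with hu_def
    set p : ℝ[X] := C c⁻¹ * ((Polynomial.Chebyshev.T ℝ (k:ℤ)).comp u) with hp_def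
    have hueval : ∀ x : ℝ, u.eval x = σ - 2 / (b - a) * x := by
      intro x; rw [hu_def]; simp
    have hpeval : ∀ x : ℝ, p.eval x
        = c⁻¹ * (Polynomial.Chebyshev.T ℝ (k:ℤ)).eval (u.eval x) := by
      intro x; rw [hp_def]; simp [eval_comp]
    have hp0 : p.eval 0 = 1 := by
      rw [hpeval, hueval]
      simp only [mul_zero, sub_zero]
      rw [← hc_def]
      exact inv_mul_cancel₀ (ne_of_gt hcpos)
    have hpbound : ∀ x : ℝ, a ≤ x → x ≤ b → |p.eval x| ≤ c⁻¹ := by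
      intro x hax hxb
      rw [hpeval]
      rw [abs_mul, abs_of_pos (inv_pos.mpr hcpos)]
      have hne : b - a ≠ 0 := ne_of_gt hba_pos
      have hux : u.eval x = (b + a - 2*x)/(b-a) := by
        rw [hueval, hσ_def]
        field_simp
      have h1 : -1 ≤ u.eval x := by
        rw [hux, le_div_iff₀ hba_pos]; linarith
      have h2 : u.eval x ≤ 1 := by
        rw [hux, div_le_one hba_pos]; linarith
      have := cheb_abs_le (k:ℤ) h1 h2
      calc c⁻¹ * |(Polynomial.Chebyshev.T ℝ (k:ℤ)).eval (u.eval x)| ≤ c⁻¹ * 1 :=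
            mul_le_mul_of_nonneg_left this (le_of_lt (inv_pos.mpr hcpos))
        _ = c⁻¹ := mul_one _
    have hpdeg : p.natDegree ≤ k := by
      rw [hp_def]
      refine le_trans natDegree_mul_le ?_
      rw [natDegree_C, zero_add, natDegree_comp]
      have h1 : u.natDegree ≤ 1 := by
        rw [hu_def]
        refine le_trans (natDegree_sub_le _ _) ?_
        simp only [max_le_iff, natDegree_C]
        constructor
        · omega
        · exact le_trans natDegree_mul_le (by simp)
      calc (Polynomial.Chebyshev.T ℝ (k:ℤ)).natDegree * u.natDegree
          ≤ (Polynomial.Chebyshev.T ℝ (k:ℤ)).natDegree * 1 :=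
            Nat.mul_le_mul_left _ h1
        _ = (Polynomial.Chebyshev.T ℝ (k:ℤ)).natDegree := mul_one _
        _ ≤ k := T_natDegree_le k
    -- q := (1 - p) / X,  X * q = 1 - p
    have hdvd : (X : ℝ[X]) ∣ (1 - p) := by
      rw [Polynomial.X_dvd_iff]
      rw [← Polynomial.coeff_zero_eq_eval_zero] at hp0
      simp [hp0]
    set q : ℝ[X] := (1 - p) / X with hq_def
    have hXq : (X : ℝ[X]) * q = 1 - p := by
      rw [hq_def]
      exact EuclideanDomain.mul_div_cancel' Polynomial.X_ne_zero hdvd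
    have hqdeg : q.natDegree ≤ k - 1 := by
      rcases eq_or_ne q 0 with hq0 | hq0
      · rw [hq0, natDegree_zero]; omega
      · have h1p : (1 - p : ℝ[X]).natDegree ≤ k := by
          refine le_trans (natDegree_sub_le _ _) ?_
          simp only [max_le_iff, natDegree_one]
          exact ⟨by omega, hpdeg⟩
        have := Polynomial.natDegree_mul (Polynomial.X_ne_zero (R := ℝ)) hq0
        rw [hXq] at this
        rw [natDegree_X] at this
        omega
    -- the approximation R := q(S)
    set R : Matrix (Fin N) (Fin N) ℝ := aeval S q with hR_def
    refine ⟨R, ?_, ?_⟩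
    · -- bandwidth of R
      intro i j hd
      rw [hR_def]
      rw [Polynomial.aeval_eq_sum_range]
      rw [Matrix.sum_apply]
      refine Finset.sum_eq_zero fun m hm => ?_
      rw [Finset.mem_range] at hm
      have hmk : m ≤ k - 1 := by omega
      have hband_m : ((m:ℝ) + 1) * β < d (i, j) := by
        have h1 : ((m:ℝ) + 1) ≤ (k:ℝ) := by
          have : (m:ℝ) ≤ (k:ℝ) - 1 := by
            have : m ≤ k - 1 := hmk
            have hcast : ((m:ℕ):ℝ) ≤ ((k-1:ℕ):ℝ) := Nat.cast_le.mpr this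
            have : ((k-1:ℕ):ℝ) = (k:ℝ) - 1 := by
              have : (1:ℕ) ≤ k := hk
              push_cast [Nat.cast_sub this]
              ring
            linarith [hcast, this.le]
          linarith
        calc ((m:ℝ) + 1) * β ≤ (k:ℝ) * β := mul_le_mul_of_nonneg_right h1 hβ
          _ < d (i, j) := hd
      have := hpow m i j hband_m
      rw [Matrix.smul_apply, this, smul_zero]
    · -- norm estimate
      -- the remainder G := S⁻¹ - R equals U diag(p(λᵢ)/λᵢ) U*
      set g : Fin N → ℝ := fun i => p.eval (lam i) / lam i with hg_def
      set G : Matrix (Fin N) (Fin N) ℝ := U * Matrix.diagonal g * star U with hG_def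
      have hSR : S * R = 1 - aeval S p := by
        have h1 : S * R = aeval S (X * q) := by
          rw [map_mul, Polynomial.aeval_X, hR_def]
        rw [h1, hXq, map_sub, map_one]
      have hSG : S * G = aeval S p := by
        have hstarU : star U * U = 1 := (Matrix.mem_unitaryGroup_iff').mp hS.eigenvectorUnitary.2
        have h1 : S * G = U * (Matrix.diagonal lam * Matrix.diagonal g) * star U := by
          rw [hspec, hG_def]
          calc U * Matrix.diagonal lam * star U * (U * Matrix.diagonal g * star U)
              = U * Matrix.diagonal lam * (star U * U) * Matrix.diagonal g * star U := by
                noncomm_ring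
            _ = U * (Matrix.diagonal lam * Matrix.diagonal g) * star U := by
                rw [hstarU, mul_one]; noncomm_ring
        rw [h1, Matrix.diagonal_mul_diagonal]
        have h2 : (fun i => lam i * g i) = fun i => p.eval (lam i) := by
          funext i
          show lam i * (p.eval (lam i) / lam i) = p.eval (lam i)
          rw [mul_comm, div_mul_cancel₀ _ (ne_of_gt (hlampos i))]
        rw [h2]
        rw [hspec, aeval_unitaryConj, aeval_diagonal]
      have hone : S * (R + G) = 1 := by
        rw [mul_add, hSR, hSG, sub_add_cancel]
      have hinv : S⁻¹ = R + G := Matrix.inv_eq_right_inv hone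
      have hdiff : S⁻¹ - R = G := by rw [hinv, add_sub_cancel_left]
      rw [hdiff]
      -- now bound the norm of G
      set Cb : ℝ := (2 / a) * ρ ^ k with hC_def
      have hCpos : 0 ≤ Cb :=
        mul_nonneg (div_nonneg (by norm_num) (le_of_lt ha)) (pow_nonneg (le_of_lt hρpos) k)
      have hgbound : ∀ i, |g i| ≤ Cb := by
        intro i
        rw [hg_def]
        have hlai := hlampos i
        rw [abs_div, abs_of_pos hlai]
        have h1 : |p.eval (lam i)| ≤ c⁻¹ := hpbound (lam i) (heig i).1 (heig i).2
        have h2 : |p.eval (lam i)| / lam i ≤ c⁻¹ / a := by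
          apply div_le_div₀ (le_of_lt (inv_pos.mpr hcpos)) h1 ha (heig i).1
        refine le_trans h2 ?_
        rw [hC_def, div_le_iff₀ ha]
        calc c⁻¹ ≤ 2 * ρ ^ k := hcinv
          _ = 2 / a * ρ ^ k * a := by field_simp
      have hGnorm : l2OpNorm G ≤ Cb := by
        rw [hG_def]
        have hUu : (hS.eigenvectorUnitary : Matrix (Fin N) (Fin N) ℝ) ∈
            unitary (Matrix (Fin N) (Fin N) ℝ) := hS.eigenvectorUnitary.2
        rw [l2OpNorm_eq]
        have e1 : ‖U * Matrix.diagonal g * star U‖ = ‖Matrix.diagonal g‖ := by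
          rw [mul_assoc]
          rw [CStarRing.norm_coe_unitary_mul (⟨U, hUu⟩ : unitary (Matrix (Fin N) (Fin N) ℝ))]
          have hsU : star U ∈ unitary (Matrix (Fin N) (Fin N) ℝ) := Unitary.star_mem hUu
          exact CStarRing.norm_mul_coe_unitary _ (⟨star U, hsU⟩ : unitary _)
        rw [e1, ← l2OpNorm_eq]
        exact l2OpNorm_diagonal_le g Cb hCpos hgbound
      exact le_trans hGnorm (le_of_eq rfl)
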